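/- Let n ≥ 2 be an integer, let λ₁, …, λₙ and h and S be positive real numbers. Consider the set K = { (L₁,…,Lₙ) : Lᵢ ≥ 0 and h(L₁ + ⋯ + Lₙ) + 2(λ₁L₁² + ⋯ + λₙLₙ²) = S }. The function (L₁, …, Lₙ) ↦ λ₁L₁² + ⋯ + λₙLₙ² attains its minimum on K at a point if and only if λ₁L₁ = λ₂L₂ = ⋯ = λₙLₙ at that point. -/

import Mathlib

open Finset

/-- Core inequality: if `y` satisfies the constraint with `S = c(h+2c)A`, `A = ∑ 1/λᵢ`,
then `∑ yᵢ ≤ c·A`, with equality iff `yᵢ = c/λᵢ`. -/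
lemma key_lemma (n : ℕ) (lam : Fin n → ℝ) (hlam : ∀ i, 0 < lam i)
    (h c : ℝ) (hh : 0 < h) (hc : 0 < c) (y : Fin n → ℝ)
    (hcon : h * ∑ i, y i + 2 * ∑ i, lam i * y i ^ 2
      = c * (h + 2 * c) * (∑ i, 1 / lam i)) :
    (∑ i, y i) ≤ c * ∑ i, 1 / lam i ∧
      ((∑ i, y i) = c * ∑ i, 1 / lam i → ∀ i, y i = c / lam i) := by
  set A := ∑ i, 1 / lam i with hA
  set T := ∑ i, y i with hT
  set Q := ∑ i, lam i * y i ^ 2 with hQ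
  have hterm : ∀ i, lam i * (y i - c / lam i) ^ 2
      = lam i * y i ^ 2 - 2 * c * y i + c ^ 2 * (1 / lam i) := by
    intro i
    have := (hlam i).ne'
    field_simp
    ring
  have hE : (∑ i, lam i * (y i - c / lam i) ^ 2) = Q - 2 * c * T + c ^ 2 * A := by
    rw [Finset.sum_congr rfl fun i _ => hterm i]
    rw [Finset.sum_add_distrib, Finset.sum_sub_distrib, ← Finset.mul_sum, ← Finset.mul_sum]
  have hEnn : 0 ≤ ∑ i, lam i * (y i - c / lam i) ^ 2 :=
    Finset.sum_nonneg fun i _ => mul_nonneg (hlam i).le (sq_nonneg _)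
  have hfac : 2 * (Q - 2 * c * T + c ^ 2 * A) = (h + 4 * c) * (c * A - T) := by
    linear_combination hcon
  have hle : T ≤ c * A := by nlinarith [hEnn, hE]
  refine ⟨hle, fun heq i => ?_⟩
  have hE0 : (∑ i, lam i * (y i - c / lam i) ^ 2) = 0 := by
    rw [hE]; nlinarith
  have := (Finset.sum_eq_zero_iff_of_nonneg
    (fun i _ => mul_nonneg (hlam i).le (sq_nonneg (y i - c / lam i)))).mp hE0 i (mem_univ i)
  have h2 : (y i - c / lam i) ^ 2 = 0 := by
    rcases mul_eq_zero.mp this with h' | h'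
    · exact absurd h' (hlam i).ne'
    · exact h'
  have := pow_eq_zero_iff (n := 2) (by norm_num) |>.mp h2
  linarith

/-- Proposition 4 (analytic content): on the constraint set
`K = {Lᵢ ≥ 0, h(L₁+⋯+Lₙ) + 2(λ₁L₁²+⋯+λₙLₙ²) = S}` (fixed total surface area of cylinders
of common height `h`), the total base area `∑ λᵢ Lᵢ²` attains its minimum on `K` at a
point iff `λ₁L₁ = λ₂L₂ = ⋯ = λₙLₙ` at that point. -/
theorem stmt_11 (n : ℕ) (hn : 2 ≤ n) (lam : Fin n → ℝ) (hlam : ∀ i, 0 < lam i)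
    (h S : ℝ) (hh : 0 < h) (hS : 0 < S)
    (Ls : Fin n → ℝ) (hLs : ∀ i, 0 ≤ Ls i)
    (hcon : h * ∑ i, Ls i + 2 * ∑ i, lam i * Ls i ^ 2 = S) :
    (∀ y : Fin n → ℝ, (∀ i, 0 ≤ y i) →
        h * ∑ i, y i + 2 * ∑ i, lam i * y i ^ 2 = S →
        ∑ i, lam i * Ls i ^ 2 ≤ ∑ i, lam i * y i ^ 2) ↔
      ∀ i j, lam i * Ls i = lam j * Ls j := by
  have hne : Nonempty (Fin n) := ⟨⟨0, by omega⟩⟩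
  set A := ∑ i, 1 / lam i with hA
  have hApos : 0 < A := Finset.sum_pos (fun i _ => one_div_pos.mpr (hlam i)) Finset.univ_nonempty
  constructor
  · -- minimizer ⇒ all λᵢLᵢ equal
    intro hmin
    -- the positive root c of c(h+2c)A = S
    set E := Real.sqrt (h ^ 2 + 8 * S / A) with hEdef
    have hpos : 0 < h ^ 2 + 8 * S / A := by
      have := div_pos (by linarith : (0:ℝ) < 8 * S) hApos
      nlinarith
    have hE2 : E ^ 2 = h ^ 2 + 8 * S / A := Real.sq_sqrt hpos.le
    have hEpos : h < E := by
      nlinarith [Real.sqrt_nonneg (h ^ 2 + 8 * S / A), div_pos (by linarith : (0:ℝ) < 8 * S) hApos]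
    set c := (E - h) / 4 with hcdef
    have hc : 0 < c := by simp only [hcdef]; linarith
    have hroot : c * (h + 2 * c) * A = S := by
      have h8 : 8 * S / A * A = 8 * S := div_mul_cancel₀ _ hApos.ne'
      field_simp [hcdef]
      linear_combination (1/8) * A * hE2 + (1/8) * h8
    -- comparison point y* i = c / lam i
    set y : Fin n → ℝ := fun i => c / lam i with hy
    have hyT : (∑ i, y i) = c * A := by
      rw [hA, Finset.mul_sum]
      exact Finset.sum_congr rfl fun i _ => by rw [hy]; field_simp
    have hyQ : (∑ i, lam i * y i ^ 2) = c ^ 2 * A := by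
      rw [hA, Finset.mul_sum]
      refine Finset.sum_congr rfl fun i _ => ?_
      have := (hlam i).ne'
      simp only [hy]
      field_simp
    have hycon : h * ∑ i, y i + 2 * ∑ i, lam i * y i ^ 2 = S := by
      rw [hyT, hyQ]; linear_combination hroot
    have hmin' := hmin y (fun i => div_nonneg hc.le (hlam i).le) hycon
    -- so T(Ls) ≥ c * A
    have hTge : c * A ≤ ∑ i, Ls i := by
      rw [hyQ] at hmin'
      nlinarith [hcon, hroot]
    have hkey := key_lemma n lam hlam h c hh hc Ls (by rw [← hA, hroot]; exact hcon)
    have hTeq : (∑ i, Ls i) = c * A := le_antisymm hkey.1 hTge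
    have hval := hkey.2 hTeq
    intro i j
    rw [hval i, hval j, mul_div_cancel₀ _ (hlam i).ne', mul_div_cancel₀ _ (hlam j).ne']
  · -- all λᵢLᵢ equal ⇒ minimizer
    intro heq y hy hycon
    obtain ⟨i0⟩ := hne
    set c := lam i0 * Ls i0 with hcdef
    have hcnn : 0 ≤ c := mul_nonneg (hlam i0).le (hLs i0)
    have hLsval : ∀ i, Ls i = c / lam i := fun i => by
      rw [eq_div_iff (hlam i).ne', hcdef]
      linear_combination heq i i0
    have hc : 0 < c := by
      rcases hcnn.lt_or_eq with h' | h'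
      · exact h'
      · exfalso
        have hz : ∀ i, Ls i = 0 := fun i => by
          rw [hLsval i, ← h']; simp
        have h1 : (∑ i, Ls i) = 0 := Finset.sum_eq_zero fun i _ => hz i
        have h2 : (∑ i, lam i * Ls i ^ 2) = 0 := Finset.sum_eq_zero fun i _ => by
          rw [hz i]; ring
        rw [h1, h2] at hcon
        simp at hcon
        linarith
    have hTLs : (∑ i, Ls i) = c * A := by
      rw [hA, Finset.mul_sum]
      exact Finset.sum_congr rfl fun i _ => by rw [hLsval i]; field_simp
    have hQLs : (∑ i, lam i * Ls i ^ 2) = c ^ 2 * A := by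
      rw [hA, Finset.mul_sum]
      refine Finset.sum_congr rfl fun i _ => ?_
      have := (hlam i).ne'
      rw [hLsval i]
      field_simp
    have hroot : c * (h + 2 * c) * A = S := by
      rw [← hcon, hTLs, hQLs]; ring
    have hkey := key_lemma n lam hlam h c hh hc y (by rw [← hA, hroot]; exact hycon)
    have := hkey.1
    nlinarith [hycon, hcon, hTLs]
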